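/- Let z = (z_1, z_2, …) and w = (w_1, w_2, …) be elements of ℓ^2(ℕ, ℂ) (square-summable complex sequences). Then the family α ↦ z^α \overline{w}^α / α!, indexed by α ∈ ℓ, is summable and Σ_{α ∈ ℓ} z^α \overline{w}^α / α! = exp(⟨z, w⟩), where ⟨z, w⟩ = Σ_{j≥1} z_j \overline{w_j}. -/

import Mathlib

set_option maxHeartbeats 1000000

open Finset Filter Topology

namespace FockAux

/-- Equivalence between `ℕ × {α // α.support ⊆ s}` and `{α // α.support ⊆ insert a s}`. -/
noncomputable def insertEquiv (a : ℕ) (s : Finset ℕ) (ha : a ∉ s) :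
    ℕ × {α : ℕ →₀ ℕ // α.support ⊆ s} ≃ {α : ℕ →₀ ℕ // α.support ⊆ insert a s} where
  toFun p := ⟨p.2.1 + Finsupp.single a p.1, by
    refine Finsupp.support_add.trans ?_
    refine Finset.union_subset (p.2.2.trans (Finset.subset_insert a s)) ?_
    exact Finsupp.support_single_subset.trans (by simp)⟩
  invFun β := (β.1 a, ⟨β.1.erase a, by
    intro j hj
    rw [Finsupp.mem_support_iff] at hj
    rcases eq_or_ne j a with rfl | hja
    · rw [Finsupp.erase_same] at hj; exact absurd rfl hj
    · rw [Finsupp.erase_ne hja] at hj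
      have := β.2 (Finsupp.mem_support_iff.mpr hj)
      rcases Finset.mem_insert.mp this with h | h
      · exact absurd h hja
      · exact h⟩)
  left_inv := by
    rintro ⟨n, α, hα⟩
    have haα : α a = 0 := by
      by_contra h
      exact ha (hα (Finsupp.mem_support_iff.mpr h))
    simp only [Prod.mk.injEq]
    constructor
    · show (α + Finsupp.single a n) a = n
      simp [haα]
    · refine Subtype.ext (Finsupp.ext fun j => ?_)
      show (α + Finsupp.single a n).erase a j = α j
      rcases eq_or_ne j a with rfl | hja
      · rw [Finsupp.erase_same, haα]
      · rw [Finsupp.erase_ne hja]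
        simp [Finsupp.single_eq_of_ne hja]
  right_inv := by
    rintro ⟨β, hβ⟩
    exact Subtype.ext (Finsupp.erase_add_single a β)

lemma insertEquiv_prod {M : Type*} [CommMonoid M] (a : ℕ) (s : Finset ℕ) (ha : a ∉ s)
    (h : ℕ → ℕ → M) (h0 : h a 0 = 1) (n : ℕ) (α : {α : ℕ →₀ ℕ // α.support ⊆ s}) :
    ((insertEquiv a s ha (n, α) : {α : ℕ →₀ ℕ // α.support ⊆ insert a s}) : ℕ →₀ ℕ).prod h
      = h a n * α.1.prod h := by
  have hd : Disjoint α.1.support (Finsupp.single a n).support := by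
    rw [Finset.disjoint_left]
    intro x hx hx'
    have : x = a := by simpa using Finsupp.support_single_subset hx'
    exact ha (this ▸ α.2 hx)
  show (α.1 + Finsupp.single a n).prod h = h a n * α.1.prod h
  rw [Finsupp.prod_add_index_of_disjoint hd, Finsupp.prod_single_index h0, mul_comm]

instance : Unique {α : ℕ →₀ ℕ // α.support ⊆ (∅ : Finset ℕ)} where
  default := ⟨0, by simp⟩
  uniq := by
    rintro ⟨α, hα⟩
    ext1
    simpa [Finsupp.support_eq_empty] using Finset.subset_empty.mp hα

lemma hasSum_empty_case {M : Type*} [AddCommMonoid M] [TopologicalSpace M]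
    (f : {α : ℕ →₀ ℕ // α.support ⊆ (∅ : Finset ℕ)} → M) :
    HasSum f (f default) :=
  hasSum_single default fun b hb => absurd (Unique.eq_default b) hb

lemma real_hasSum (c : ℕ → ℝ) (hc : ∀ j, 0 ≤ c j) (s : Finset ℕ) :
    HasSum (fun α : {α : ℕ →₀ ℕ // α.support ⊆ s} =>
      α.1.prod fun j n => c j ^ n / n.factorial) (∏ j ∈ s, Real.exp (c j)) := by
  classical
  induction s using Finset.induction with
  | empty =>
    rw [Finset.prod_empty]
    have h := hasSum_empty_case
      (fun α : {α : ℕ →₀ ℕ // α.support ⊆ (∅ : Finset ℕ)} =>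
        α.1.prod fun j n => c j ^ n / n.factorial)
    rwa [show ((default : {α : ℕ →₀ ℕ // α.support ⊆ (∅ : Finset ℕ)}).1.prod
      fun j n => c j ^ n / n.factorial) = 1 from Finsupp.prod_zero_index] at h
  | @insert a s ha ih =>
    have hexp : HasSum (fun n : ℕ => c a ^ n / n.factorial) (Real.exp (c a)) := by
      rw [Real.exp_eq_exp_ℝ]
      exact NormedSpace.expSeries_div_hasSum_exp (c a)
    have hmul : HasSum (fun p : ℕ × {α : ℕ →₀ ℕ // α.support ⊆ s} =>
        (c a ^ p.1 / p.1.factorial) * (p.2.1.prod fun j n => c j ^ n / n.factorial))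
        (Real.exp (c a) * ∏ j ∈ s, Real.exp (c j)) := by
      refine hexp.mul ih ?_
      refine hexp.summable.mul_of_nonneg ih.summable ?_ ?_
      · intro n
        exact div_nonneg (pow_nonneg (hc a) n) (Nat.cast_nonneg _)
      · intro α
        exact Finset.prod_nonneg fun j _ =>
          div_nonneg (pow_nonneg (hc j) _) (Nat.cast_nonneg _)
    have hfe : ((fun α : {α : ℕ →₀ ℕ // α.support ⊆ insert a s} =>
          α.1.prod fun j n => c j ^ n / n.factorial) ∘ (insertEquiv a s ha))
        = fun p : ℕ × {α : ℕ →₀ ℕ // α.support ⊆ s} =>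
          (c a ^ p.1 / p.1.factorial) * (p.2.1.prod fun j n => c j ^ n / n.factorial) := by
      funext p
      have h := insertEquiv_prod a s ha (fun j n => c j ^ n / (n.factorial : ℝ))
        (by simp) p.1 p.2
      simpa [Function.comp] using h
    rw [Finset.prod_insert ha, ← Equiv.hasSum_iff (insertEquiv a s ha), hfe]
    exact hmul

lemma prod_nonneg_aux (c : ℕ → ℝ) (hc : ∀ j, 0 ≤ c j) (α : ℕ →₀ ℕ) :
    0 ≤ α.prod fun j n => c j ^ n / n.factorial := by
  rw [Finsupp.prod]
  exact Finset.prod_nonneg fun j _ => div_nonneg (pow_nonneg (hc j) _) (Nat.cast_nonneg _)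

lemma real_summable (c : ℕ → ℝ) (hc0 : ∀ j, 0 ≤ c j) (hc : Summable c) :
    Summable (fun α : ℕ →₀ ℕ => α.prod fun j n => c j ^ n / n.factorial) := by
  classical
  refine summable_of_sum_le (c := Real.exp (∑' j, c j))
    (fun α => prod_nonneg_aux c hc0 α) (fun T => ?_)
  set s : Finset ℕ := T.sup Finsupp.support with hs
  have hsub : ∀ α ∈ T, α.support ⊆ s := fun α hα => Finset.le_sup hα
  let e : {x // x ∈ T} ↪ {α : ℕ →₀ ℕ // α.support ⊆ s} :=
    ⟨fun x => ⟨x.1, hsub x.1 x.2⟩, by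
      intro x y h
      rw [Subtype.mk.injEq] at h
      exact Subtype.ext h⟩
  have key := sum_le_hasSum (T.attach.map e)
    (fun α _ => prod_nonneg_aux c hc0 α.1) (real_hasSum c hc0 s)
  rw [Finset.sum_map] at key
  have heq : (∑ x ∈ T.attach, ((e x : {α : ℕ →₀ ℕ // α.support ⊆ s}) : ℕ →₀ ℕ).prod
        fun j n => c j ^ n / n.factorial)
      = ∑ α ∈ T, α.prod fun j n => c j ^ n / n.factorial := by
    rw [← Finset.sum_attach T (fun α => α.prod fun j n => c j ^ n / (n.factorial : ℝ))]
    rfl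
  rw [heq] at key
  refine key.trans ?_
  rw [← Real.exp_sum]
  exact Real.exp_le_exp.mpr (Summable.sum_le_tsum s (fun j _ => hc0 j) hc)

lemma norm_prod_eq (c : ℕ → ℂ) (α : ℕ →₀ ℕ) :
    ‖α.prod fun j n => c j ^ n / (n.factorial : ℂ)‖
      = α.prod fun j n => ‖c j‖ ^ n / (n.factorial : ℝ) := by
  rw [Finsupp.prod, Finsupp.prod, norm_prod]
  refine Finset.prod_congr rfl fun j _ => ?_
  rw [norm_div, norm_pow, Complex.norm_natCast]

lemma complex_hasSum (c : ℕ → ℂ)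
    (hnorm : Summable (fun α : ℕ →₀ ℕ => α.prod fun j n => ‖c j‖ ^ n / n.factorial))
    (s : Finset ℕ) :
    HasSum (fun α : {α : ℕ →₀ ℕ // α.support ⊆ s} =>
      α.1.prod fun j n => c j ^ n / n.factorial) (∏ j ∈ s, Complex.exp (c j)) := by
  classical
  induction s using Finset.induction with
  | empty =>
    rw [Finset.prod_empty]
    have h := hasSum_empty_case
      (fun α : {α : ℕ →₀ ℕ // α.support ⊆ (∅ : Finset ℕ)} =>
        α.1.prod fun j n => c j ^ n / (n.factorial : ℂ))
    rwa [show ((default : {α : ℕ →₀ ℕ // α.support ⊆ (∅ : Finset ℕ)}).1.prod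
      fun j n => c j ^ n / (n.factorial : ℂ)) = 1 from Finsupp.prod_zero_index] at h
  | @insert a s ha ih =>
    have hexp : HasSum (fun n : ℕ => c a ^ n / n.factorial) (Complex.exp (c a)) := by
      rw [Complex.exp_eq_exp_ℂ]
      exact NormedSpace.expSeries_div_hasSum_exp (c a)
    have hsubnorm : Summable (fun α : {α : ℕ →₀ ℕ // α.support ⊆ s} =>
        ‖α.1.prod fun j n => c j ^ n / (n.factorial : ℂ)‖) := by
      have h' := hnorm.comp_injective
        (Subtype.val_injective : Function.Injective
          (Subtype.val : {α : ℕ →₀ ℕ // α.support ⊆ s} → ℕ →₀ ℕ))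
      refine h'.congr fun α => ?_
      exact (norm_prod_eq c α.1).symm
    have hmul : HasSum (fun p : ℕ × {α : ℕ →₀ ℕ // α.support ⊆ s} =>
        (c a ^ p.1 / p.1.factorial) * (p.2.1.prod fun j n => c j ^ n / n.factorial))
        (Complex.exp (c a) * ∏ j ∈ s, Complex.exp (c j)) := by
      have ht3 : T3Space ℂ := inferInstance
      apply hexp.mul ih
      apply summable_mul_of_summable_norm
        (NormedSpace.norm_expSeries_div_summable (c a)) hsubnorm
    have hfe : ((fun α : {α : ℕ →₀ ℕ // α.support ⊆ insert a s} =>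
          α.1.prod fun j n => c j ^ n / n.factorial) ∘ (insertEquiv a s ha))
        = fun p : ℕ × {α : ℕ →₀ ℕ // α.support ⊆ s} =>
          (c a ^ p.1 / p.1.factorial) * (p.2.1.prod fun j n => c j ^ n / n.factorial) := by
      funext p
      have h := insertEquiv_prod a s ha (fun j n => c j ^ n / (n.factorial : ℂ))
        (by simp) p.1 p.2
      simpa [Function.comp] using h
    rw [Finset.prod_insert ha, ← Equiv.hasSum_iff (insertEquiv a s ha), hfe]
    exact hmul

end FockAux

/-- The reproducing kernel of the Fock space:
`Σ_{α ∈ ℓ} z^α conj(w)^α / α! = exp(⟨z,w⟩_{ℓ₂})` for square-summable sequences `z, w`. -/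
theorem stmt5 (z w : ℕ → ℂ)
    (hz : Summable fun j => ‖z j‖ ^ 2) (hw : Summable fun j => ‖w j‖ ^ 2) :
    Summable (fun α : ℕ →₀ ℕ =>
      (α.prod fun j n => (z j) ^ n) * (α.prod fun j n => ((starRingEnd ℂ) (w j)) ^ n) /
        (α.prod fun _ n => (n.factorial : ℂ))) ∧
    (∑' α : ℕ →₀ ℕ,
        (α.prod fun j n => (z j) ^ n) * (α.prod fun j n => ((starRingEnd ℂ) (w j)) ^ n) /
          (α.prod fun _ n => (n.factorial : ℂ))) =
      Complex.exp (∑' j : ℕ, z j * (starRingEnd ℂ) (w j)) := by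
  classical
  set c : ℕ → ℂ := fun j => z j * (starRingEnd ℂ) (w j) with hc
  have hfun : (fun α : ℕ →₀ ℕ =>
      (α.prod fun j n => (z j) ^ n) * (α.prod fun j n => ((starRingEnd ℂ) (w j)) ^ n) /
        (α.prod fun _ n => (n.factorial : ℂ)))
      = fun α : ℕ →₀ ℕ => α.prod fun j n => c j ^ n / n.factorial := by
    funext α
    rw [Finsupp.prod, Finsupp.prod, Finsupp.prod, Finsupp.prod, ← Finset.prod_mul_distrib,
      ← Finset.prod_div_distrib]
    exact Finset.prod_congr rfl fun j _ => by rw [mul_pow]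
  have hcnorm : Summable fun j => ‖c j‖ := by
    refine Summable.of_nonneg_of_le (fun j => norm_nonneg _) (fun j => ?_)
      ((hz.add hw).div_const 2)
    rw [hc]
    simp only [norm_mul, RCLike.norm_conj]
    nlinarith [sq_nonneg (‖z j‖ - ‖w j‖), norm_nonneg (z j), norm_nonneg (w j)]
  have hnormsum : Summable (fun α : ℕ →₀ ℕ => α.prod fun j n => ‖c j‖ ^ n / n.factorial) :=
    FockAux.real_summable _ (fun j => norm_nonneg _) hcnorm
  have hsum : Summable (fun α : ℕ →₀ ℕ => α.prod fun j n => c j ^ n / (n.factorial : ℂ)) := by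
    refine Summable.of_norm ?_
    refine hnormsum.congr fun α => ?_
    rw [FockAux.norm_prod_eq]
  rw [hfun]
  refine ⟨hsum, ?_⟩
  set F : Finset ℕ → ℂ := fun s => ∏ j ∈ s, Complex.exp (c j) with hF
  have h1 : Tendsto F atTop (𝓝 (Complex.exp (∑' j, c j))) := by
    have hcs : HasSum c (∑' j, c j) := hcnorm.of_norm.hasSum
    have h := (Complex.continuous_exp.continuousAt.tendsto).comp hcs
    refine h.congr fun s => ?_
    exact Complex.exp_sum s c
  have h2 : Tendsto F atTop
      (𝓝 (∑' α : ℕ →₀ ℕ, α.prod fun j n => c j ^ n / (n.factorial : ℂ))) := by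
    rw [Metric.tendsto_nhds]
    intro ε hε
    have htail := (tendsto_order.1 (tendsto_tsum_compl_atTop_zero
      (fun α : ℕ →₀ ℕ => α.prod fun j n => ‖c j‖ ^ n / n.factorial))).2 ε hε
    obtain ⟨T₀, hT₀⟩ := htail.exists
    rw [eventually_atTop]
    refine ⟨T₀.sup Finsupp.support, fun s hs => ?_⟩
    set A : Set (ℕ →₀ ℕ) := {α | α.support ⊆ s} with hA
    have hFs : F s = ∑' (α : A), (α : ℕ →₀ ℕ).prod fun j n => c j ^ n / (n.factorial : ℂ) :=
      (FockAux.complex_hasSum c hnormsum s).tsum_eq.symm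
    have hsplit := hsum.tsum_subtype_add_tsum_subtype_compl A
    rw [dist_eq_norm]
    have hkey : F s - (∑' α : ℕ →₀ ℕ, α.prod fun j n => c j ^ n / (n.factorial : ℂ))
        = -∑' (α : ↥Aᶜ), (α : ℕ →₀ ℕ).prod fun j n => c j ^ n / (n.factorial : ℂ) := by
      rw [hFs, ← hsplit]; ring
    rw [hkey, norm_neg]
    have hb1 : ‖∑' (α : ↥Aᶜ), (α : ℕ →₀ ℕ).prod fun j n => c j ^ n / (n.factorial : ℂ)‖
        ≤ ∑' (α : ↥Aᶜ), (α : ℕ →₀ ℕ).prod fun j n => ‖c j‖ ^ n / (n.factorial : ℝ) := by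
      refine (norm_tsum_le_tsum_norm ?_).trans_eq ?_
      · refine (hnormsum.subtype Aᶜ).congr fun α => ?_
        exact (FockAux.norm_prod_eq c α.1).symm
      · exact tsum_congr fun α => FockAux.norm_prod_eq c α.1
    refine lt_of_le_of_lt (hb1.trans ?_) hT₀
    have hmap : ∀ α : ↥Aᶜ, (α : ℕ →₀ ℕ) ∉ (T₀ : Set (ℕ →₀ ℕ)) := by
      rintro ⟨α, hα⟩ hmem
      exact hα (((Finset.le_sup hmem).trans hs : α.support ⊆ s))
    refine Summable.tsum_le_tsum_of_inj (fun α => ⟨α.1, hmap α⟩) ?_ ?_ ?_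
      (hnormsum.subtype _) (hnormsum.subtype _)
    · intro x y h
      rw [Subtype.mk.injEq] at h
      exact Subtype.ext h
    · intro β _
      exact FockAux.prod_nonneg_aux _ (fun j => norm_nonneg _) β.1
    · intro α; exact le_rfl
  exact tendsto_nhds_unique h2 h1
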